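/- Let s ∈ ℂ and p > 0, and define Υ(μ) = |1 − μ s|² + |μ|² p. Then min over μ ∈ ℂ and ν > 0 of (νΥ(μ) − ln ν) equals 1 − ln(1 + |s|²/p). Consequently, maximizing −(νΥ(μ) − ln ν) over (μ, ν) recovers the rate term ln(1 + |s|²/p) up to an additive constant. -/

import Mathlib

/-- For `s ∈ ℂ`, `p > 0` and `Υ(μ) = |1 − μs|² + |μ|² p`, the minimum
of `νΥ(μ) − ln ν` over `μ ∈ ℂ` and `ν > 0` equals `1 − ln(1 + |s|²/p)`; i.e. the
WMMSE surrogate recovers the rate term `ln(1 + |s|²/p)` up to an additive constant. -/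
theorem stmt_6 (s : ℂ) (p : ℝ) (hp : 0 < p) :
    let Υ : ℂ → ℝ := fun μ =>
      (‖1 - μ * s‖) ^ 2 + (‖μ‖) ^ 2 * p
    IsLeast {x : ℝ | ∃ (μ : ℂ) (ν : ℝ), 0 < ν ∧ x = ν * Υ μ - Real.log ν}
      (1 - Real.log (1 + (‖s‖) ^ 2 / p)) := by
  intro Υ
  have habs : (‖s‖) ^ 2 = s.re ^ 2 + s.im ^ 2 := by
    rw [Complex.sq_norm, Complex.normSq_apply]; ring
  set q : ℝ := (‖s‖) ^ 2 + p with hqdef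
  have hq : 0 < q := by positivity
  have hqp : 1 + (‖s‖) ^ 2 / p = q / p := by
    field_simp [hqdef]; ring
  constructor
  · refine ⟨(starRingEnd ℂ) s / (q : ℂ), q / p, by positivity, ?_⟩
    have h1 : (1 : ℂ) - (starRingEnd ℂ) s / (q : ℂ) * s = ((p / q : ℝ) : ℂ) := by
      have hm : (starRingEnd ℂ) s * s = ((‖s‖ ^ 2 : ℝ) : ℂ) := by
        rw [Complex.sq_norm]
        exact (Complex.normSq_eq_conj_mul_self).symm
      have hqne : (q : ℂ) ≠ 0 := by exact_mod_cast hq.ne'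
      field_simp
      rw [hm]
      push_cast [hqdef]
      have hqne' : ((‖s‖ : ℂ) ^ 2 + (p : ℂ)) ≠ 0 := by rw [hqdef] at hqne; exact_mod_cast hqne
      linear_combination (-(p : ℂ)) * mul_inv_cancel₀ hqne'
    have hΥ : Υ ((starRingEnd ℂ) s / (q : ℂ)) = p / q := by
      simp only [Υ, h1]
      rw [norm_div, Complex.norm_conj]
      simp only [Complex.norm_real, Real.norm_eq_abs]
      rw [abs_of_pos (by positivity), abs_of_pos hq]
      rw [div_pow, div_pow]
      rw [hqdef]
      field_simp
      ring
    rw [hΥ, hqp]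
    rw [div_mul_div_comm, mul_comm q p, div_self (by positivity)]
  · rintro x ⟨μ, ν, hν, rfl⟩
    have hΥge : p / q ≤ Υ μ := by
      rw [div_le_iff₀ hq]
      simp only [Υ, Complex.sq_norm, Complex.normSq_apply, Complex.sub_re, Complex.sub_im,
        Complex.mul_re, Complex.mul_im, Complex.one_re, Complex.one_im, hqdef, habs]
      nlinarith [sq_nonneg (μ.re * (s.re ^ 2 + s.im ^ 2 + p) - s.re),
        sq_nonneg (μ.im * (s.re ^ 2 + s.im ^ 2 + p) + s.im),
        sq_nonneg μ.re, sq_nonneg μ.im, hp.le]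
    have hΥpos : 0 < Υ μ := lt_of_lt_of_le (by positivity) hΥge
    have hlog1 : Real.log (ν * Υ μ) ≤ ν * Υ μ - 1 :=
      Real.log_le_sub_one_of_pos (by positivity)
    rw [Real.log_mul hν.ne' hΥpos.ne'] at hlog1
    have hlog2 : Real.log (p / q) ≤ Real.log (Υ μ) :=
      Real.log_le_log (by positivity) hΥge
    have hlog3 : Real.log (p / q) = - Real.log (q / p) := by
      rw [Real.log_div hp.ne' hq.ne', Real.log_div hq.ne' hp.ne']; ring
    rw [hqp]
    clear_value Υ q
    linarith
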